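/- For every x ∈ ℝ³ with x ≠ 0, x ≠ a₁ and x ≠ a₂, one has K(x)² + H(x)·L(x) > 0. (In the supergravity interpretation: under the stated horizon and fixed-point inequalities, the invariant N = 1/(K² + H L) of the three-centred L(3,1) black lens is strictly positive everywhere on ℝ³ away from the three centres, with no collinearity assumption on the centres.) -/
import Mathlib


open EuclideanSpace

/-- Auxiliary purely real inequality after clearing denominators. -/
lemma blackLens_aux (k₁ k₂ l₀ r r₁ r₂ A₁ A₂ A₁₂ : ℝ)
    (hr : 0 < r) (hr1 : 0 < r₁) (hr2 : 0 < r₂) (hA12 : 0 < A₁₂)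
    (hl0 : 0 < l₀)
    (h1 : r - r₁ ≤ A₁) (h2 : r - r₂ ≤ A₂)
    (hpt : A₁₂ * r ≤ A₁ * r₂ + A₂ * r₁)
    (hk1 : A₁ * A₁₂ + A₁ * (k₁ - k₂) ^ 2 < (3 * k₁ ^ 2 - l₀) * A₁₂)
    (hk2 : A₂ * A₁₂ + A₂ * (k₁ - k₂) ^ 2 < (3 * k₂ ^ 2 - l₀) * A₁₂) :
    0 < 3 * l₀ * r₁ * r₂ + (3 * k₁ ^ 2 - l₀) * r * r₂ + (3 * k₂ ^ 2 - l₀) * r * r₁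
        + 3 * r * r₁ * r₂ - r ^ 2 * r₂ - r ^ 2 * r₁ - (k₁ - k₂) ^ 2 * r ^ 2 := by
  have hrr2 : 0 < r * r₂ := mul_pos hr hr2
  have hrr1 : 0 < r * r₁ := mul_pos hr hr1
  have e1 := mul_lt_mul_of_pos_right hk1 hrr2
  have e2 := mul_lt_mul_of_pos_right hk2 hrr1
  have e3 := mul_le_mul_of_nonneg_left hpt (mul_nonneg (sq_nonneg (k₁ - k₂)) hr.le)
  have e4 := mul_le_mul_of_nonneg_right h1 (mul_pos hrr2 hA12).le
  have e5 := mul_le_mul_of_nonneg_right h2 (mul_pos hrr1 hA12).le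
  have hpos : 0 < (3 * l₀ * r₁ * r₂ + r * r₁ * r₂) * A₁₂ := by positivity
  nlinarith [mul_pos (mul_pos hrr1 hr2) hA12]

/-- **Positivity of the invariant `N⁻¹ = K² + H·L` for the three-centred `L(3,1)` black lens.**
Work in `ℝ³ = EuclideanSpace ℝ (Fin 3)` with centres `0, a₁, a₂`.  Under the horizon
inequality and the two fixed-point inequalities, `K(x)² + H(x)·L(x) > 0` for every
`x` away from the three centres, with no collinearity assumption. -/
theorem blackLens_N_pos
    (a₁ a₂ : EuclideanSpace ℝ (Fin 3))
    (ha₁ : a₁ ≠ 0) (ha₂ : a₂ ≠ 0) (ha₁₂ : a₁ ≠ a₂)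
    (k₁ k₂ l₀ m₀ : ℝ)
    (hhor : 3 * l₀ ^ 3 - 9 * m₀ ^ 2 > 0)
    (hfix₁ : -1 + (3 * k₁ ^ 2 - l₀) / ‖a₁‖ - (k₁ - k₂) ^ 2 / ‖a₁ - a₂‖ > 0)
    (hfix₂ : -1 + (3 * k₂ ^ 2 - l₀) / ‖a₂‖ - (k₁ - k₂) ^ 2 / ‖a₁ - a₂‖ > 0) :
    ∀ x : EuclideanSpace ℝ (Fin 3), x ≠ 0 → x ≠ a₁ → x ≠ a₂ →
      (k₁ / ‖x - a₁‖ + k₂ / ‖x - a₂‖) ^ 2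
        + (3 / ‖x‖ - 1 / ‖x - a₁‖ - 1 / ‖x - a₂‖)
          * (1 + l₀ / ‖x‖ + k₁ ^ 2 / ‖x - a₁‖ + k₂ ^ 2 / ‖x - a₂‖) > 0 := by
  intro x hx hx1 hx2
  have hA1 : 0 < ‖a₁‖ := norm_pos_iff.mpr ha₁
  have hA2 : 0 < ‖a₂‖ := norm_pos_iff.mpr ha₂
  have hA12 : 0 < ‖a₁ - a₂‖ := norm_pos_iff.mpr (sub_ne_zero.mpr ha₁₂)
  have hr : 0 < ‖x‖ := norm_pos_iff.mpr hx
  have hr1 : 0 < ‖x - a₁‖ := norm_pos_iff.mpr (sub_ne_zero.mpr hx1)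
  have hr2 : 0 < ‖x - a₂‖ := norm_pos_iff.mpr (sub_ne_zero.mpr hx2)
  have hl0 : 0 < l₀ := by nlinarith [sq_nonneg m₀, sq_nonneg l₀, sq_nonneg (l₀ - 1), sq_nonneg (l₀ + 1)]
  -- triangle inequalities
  have h1 : ‖x‖ - ‖x - a₁‖ ≤ ‖a₁‖ := by
    have := norm_add_le (x - a₁) a₁
    simp only [sub_add_cancel] at this
    linarith
  have h2 : ‖x‖ - ‖x - a₂‖ ≤ ‖a₂‖ := by
    have := norm_add_le (x - a₂) a₂
    simp only [sub_add_cancel] at this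
    linarith
  -- Ptolemy's inequality for the four points a₁, x, a₂, 0
  have hpt : ‖a₁ - a₂‖ * ‖x‖ ≤ ‖a₁‖ * ‖x - a₂‖ + ‖a₂‖ * ‖x - a₁‖ := by
    have := EuclideanGeometry.mul_dist_le_mul_dist_add_mul_dist a₁ x a₂ (0 : EuclideanSpace ℝ (Fin 3))
    simp only [dist_eq_norm, sub_zero] at this
    calc ‖a₁ - a₂‖ * ‖x‖ ≤ ‖a₁ - x‖ * ‖a₂‖ + ‖x - a₂‖ * ‖a₁‖ := this
      _ = ‖a₁‖ * ‖x - a₂‖ + ‖a₂‖ * ‖x - a₁‖ := by rw [norm_sub_rev a₁ x]; ring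
  -- clear denominators in the fixed-point hypotheses
  have hk1 : ‖a₁‖ * ‖a₁ - a₂‖ + ‖a₁‖ * (k₁ - k₂) ^ 2 < (3 * k₁ ^ 2 - l₀) * ‖a₁ - a₂‖ := by
    have h := hfix₁
    rw [gt_iff_lt, ← sub_pos] at h
    have h' : 0 < (-1 + (3 * k₁ ^ 2 - l₀) / ‖a₁‖ - (k₁ - k₂) ^ 2 / ‖a₁ - a₂‖) * (‖a₁‖ * ‖a₁ - a₂‖) := by
      have : (0:ℝ) < ‖a₁‖ * ‖a₁ - a₂‖ := mul_pos hA1 hA12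
      nlinarith [hfix₁]
    have e : (-1 + (3 * k₁ ^ 2 - l₀) / ‖a₁‖ - (k₁ - k₂) ^ 2 / ‖a₁ - a₂‖) * (‖a₁‖ * ‖a₁ - a₂‖)
        = (3 * k₁ ^ 2 - l₀) * ‖a₁ - a₂‖ - (‖a₁‖ * ‖a₁ - a₂‖ + ‖a₁‖ * (k₁ - k₂) ^ 2) := by
      field_simp
      ring
    linarith [e ▸ h']
  have hk2 : ‖a₂‖ * ‖a₁ - a₂‖ + ‖a₂‖ * (k₁ - k₂) ^ 2 < (3 * k₂ ^ 2 - l₀) * ‖a₁ - a₂‖ := by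
    have h' : 0 < (-1 + (3 * k₂ ^ 2 - l₀) / ‖a₂‖ - (k₁ - k₂) ^ 2 / ‖a₁ - a₂‖) * (‖a₂‖ * ‖a₁ - a₂‖) := by
      have : (0:ℝ) < ‖a₂‖ * ‖a₁ - a₂‖ := mul_pos hA2 hA12
      nlinarith [hfix₂]
    have e : (-1 + (3 * k₂ ^ 2 - l₀) / ‖a₂‖ - (k₁ - k₂) ^ 2 / ‖a₁ - a₂‖) * (‖a₂‖ * ‖a₁ - a₂‖)
        = (3 * k₂ ^ 2 - l₀) * ‖a₁ - a₂‖ - (‖a₂‖ * ‖a₁ - a₂‖ + ‖a₂‖ * (k₁ - k₂) ^ 2) := by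
      field_simp
      ring
    linarith [e ▸ h']
  have hpt' : ‖a₁ - a₂‖ * ‖x‖ ≤ ‖a₁‖ * ‖x - a₂‖ + ‖a₂‖ * ‖x - a₁‖ := hpt
  have hN := blackLens_aux k₁ k₂ l₀ ‖x‖ ‖x - a₁‖ ‖x - a₂‖ ‖a₁‖ ‖a₂‖ ‖a₁ - a₂‖
    hr hr1 hr2 hA12 hl0 (by linarith) (by linarith) hpt' hk1 hk2
  have key : (k₁ / ‖x - a₁‖ + k₂ / ‖x - a₂‖) ^ 2
        + (3 / ‖x‖ - 1 / ‖x - a₁‖ - 1 / ‖x - a₂‖)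
          * (1 + l₀ / ‖x‖ + k₁ ^ 2 / ‖x - a₁‖ + k₂ ^ 2 / ‖x - a₂‖)
      = (3 * l₀ * ‖x - a₁‖ * ‖x - a₂‖ + (3 * k₁ ^ 2 - l₀) * ‖x‖ * ‖x - a₂‖
          + (3 * k₂ ^ 2 - l₀) * ‖x‖ * ‖x - a₁‖ + 3 * ‖x‖ * ‖x - a₁‖ * ‖x - a₂‖
          - ‖x‖ ^ 2 * ‖x - a₂‖ - ‖x‖ ^ 2 * ‖x - a₁‖ - (k₁ - k₂) ^ 2 * ‖x‖ ^ 2)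
        / (‖x‖ ^ 2 * ‖x - a₁‖ * ‖x - a₂‖) := by
    field_simp
    ring
  rw [key]
  positivity
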